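/- If D ⊆ ℕ is bounded truth-table reducible to K, then D is not bi-immune; that is, either D or its complement has an infinite computably enumerable subset (or is finite). -/

import Mathlib

/-- Codes for oracle Turing machines (partial recursive functions relative to an oracle). -/
inductive OCode : Type
  | zero : OCode
  | succ : OCode
  | left : OCode
  | right : OCode
  | oracle : OCode
  | pair : OCode → OCode → OCode
  | comp : OCode → OCode → OCode
  | prec : OCode → OCode → OCode
  | rfind' : OCode → OCode

namespace OCode

/-- A standard enumeration of oracle machine codes. -/
def ofNat : ℕ → OCode
  | 0 => zero
  | 1 => succ
  | 2 => left
  | 3 => right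
  | 4 => oracle
  | n + 5 =>
    let m := n.div2.div2
    have hm : m < n + 5 := by
      simp only [m, Nat.div2_val]
      exact
        lt_of_le_of_lt (le_trans (Nat.div_le_self _ _) (Nat.div_le_self _ _))
          (Nat.lt_succ_of_le (Nat.le_add_right _ _))
    have _m1 : m.unpair.1 < n + 5 := lt_of_le_of_lt m.unpair_left_le hm
    have _m2 : m.unpair.2 < n + 5 := lt_of_le_of_lt m.unpair_right_le hm
    match n.bodd, n.div2.bodd with
    | false, false => pair (ofNat m.unpair.1) (ofNat m.unpair.2)
    | false, true  => comp (ofNat m.unpair.1) (ofNat m.unpair.2)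
    | true , false => prec (ofNat m.unpair.1) (ofNat m.unpair.2)
    | true , true  => rfind' (ofNat m)
  decreasing_by all_goals first | exact _m1 | exact _m2 | exact hm

/-- Evaluation of an oracle machine code relative to an oracle `g`. -/
def eval (g : ℕ →. ℕ) : OCode → ℕ →. ℕ
  | zero => pure 0
  | succ => Nat.succ
  | left => ↑fun n : ℕ => n.unpair.1
  | right => ↑fun n : ℕ => n.unpair.2
  | oracle => g
  | pair cf cg => fun n => Nat.pair <$> eval g cf n <*> eval g cg n
  | comp cf cg => fun n => eval g cg n >>= eval g cf
  | prec cf cg =>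
    Nat.unpaired fun a n =>
      n.rec (eval g cf a) fun y IH => do
        let i ← IH
        eval g cg (Nat.pair a (Nat.pair y i))
  | rfind' cf =>
    Nat.unpaired fun a m =>
      (Nat.rfind fun n => (fun m => m = 0) <$> eval g cf (Nat.pair a (n + m))).map (· + m)

end OCode

open Classical in
/-- The characteristic function of a set of naturals, as a `{0,1}`-valued function. -/
noncomputable def chi (A : Set ℕ) : ℕ → ℕ := fun n => if n ∈ A then 1 else 0

/-- The characteristic function of `A`, as a (total) partial function, used as an oracle. -/
noncomputable def charFun (A : Set ℕ) : ℕ →. ℕ := fun n => Part.some (chi A n)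

/-- `A` is Turing reducible to `B`: some oracle machine with oracle (the characteristic
function of) `B` computes the characteristic function of `A`. -/
def TuringRed (A B : Set ℕ) : Prop :=
  ∃ c : OCode, ∀ n, OCode.eval (charFun B) c n = Part.some (chi A n)

/-- The Turing jump of `A` : the halting problem relative to `A`. -/
def jump (A : Set ℕ) : Set ℕ :=
  {e | (OCode.eval (charFun A) (OCode.ofNat e) e).Dom}

/-- The halting set `K = {e : Mₑ(e) halts}`. -/
def Kset : Set ℕ := {e | ((Denumerable.ofNat Nat.Partrec.Code e).eval e).Dom}

/-- The `e`-th computably enumerable set `Wₑ`, the domain of the `e`-th machine. -/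
def Wenum (e : ℕ) : Set ℕ := {x | ((Denumerable.ofNat Nat.Partrec.Code e).eval x).Dom}

/-- A set of naturals is computably enumerable. -/
def CEset (A : Set ℕ) : Prop := ∃ c : Nat.Partrec.Code, A = {x | (c.eval x).Dom}

open Classical in
/-- The list of oracle answers of `B` to a list of queries. -/
noncomputable def answers (B : Set ℕ) (qs : List ℕ) : List Bool :=
  qs.map fun q => decide (q ∈ B)

/-- Truth-table reducibility: a total computable reduction, given by a computable function
producing the queries and a total computable function evaluating the truth table on
the vector of oracle answers. -/
def TTRed (A B : Set ℕ) : Prop :=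
  ∃ f : ℕ → List ℕ, ∃ g : ℕ → List Bool → Bool,
    Computable f ∧ Computable₂ g ∧ ∀ x, x ∈ A ↔ g x (answers B (f x)) = true

/-- Bounded truth-table reducibility: truth-table reducibility with a constant bound
on the number of queries. -/
def BTTRed (A B : Set ℕ) : Prop :=
  ∃ f : ℕ → List ℕ, ∃ g : ℕ → List Bool → Bool, ∃ k : ℕ,
    Computable f ∧ Computable₂ g ∧ (∀ x, (f x).length ≤ k) ∧
    ∀ x, x ∈ A ↔ g x (answers B (f x)) = true

/-- A set is immune if it is infinite but has no infinite c.e. subset. -/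
def Immune (C : Set ℕ) : Prop :=
  C.Infinite ∧ ∀ W : Set ℕ, CEset W → W ⊆ C → W.Finite

/-- A set is bi-immune if both it and its complement are immune. -/
def BiImmune (C : Set ℕ) : Prop := Immune C ∧ Immune Cᶜ

/-- The principal function of `B`: `pfun B x` is the `x`-th element of `B` in increasing order. -/
noncomputable def pfun (B : Set ℕ) : ℕ → ℕ := Nat.nth (· ∈ B)

/-- A set is hyperimmune if it is infinite and its principal function is not majorized
by any computable function. -/
def Hyperimmune (B : Set ℕ) : Prop :=
  B.Infinite ∧ ∀ g : ℕ → ℕ, Computable g → ¬ ∀ x, pfun B x < g x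

/-- `D` is weakly `n`-c.e.: some computable approximation `h` converges to the
characteristic function of `D` with at most `n` mind changes on each argument. -/
def WeaklyNCE (n : ℕ) (D : Set ℕ) : Prop :=
  ∃ h : ℕ → ℕ → ℕ, Computable₂ h ∧ ∀ x,
    (∀ᶠ s in Filter.atTop, h x s = chi D x) ∧
    {s | h x s ≠ h x (s + 1)}.Finite ∧ {s | h x s ≠ h x (s + 1)}.ncard ≤ n

/-- `f` is in `EN m`: there are `m` partial computable functions such that on every
input at least one of them converges to the correct value of `f`. -/
def EN {α β : Type} [Primcodable α] [Primcodable β] (m : ℕ) (f : α → β) : Prop :=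
  ∃ F : Fin m → α →. β, (∀ i, Partrec (F i)) ∧ ∀ x, ∃ i, f x ∈ F i x

/-- The counting function `#ₙ^A`: the number of distinct elements among the inputs
that belong to `A`. -/
noncomputable def cardFn (A : Set ℕ) (n : ℕ) (v : List.Vector ℕ n) : ℕ :=
  ({x | x ∈ v.toList} ∩ A).ncard

open Classical in
/-- The `n`-fold characteristic function `χₙ^A`. -/
noncomputable def chiVec (A : Set ℕ) (n : ℕ) (v : List.Vector ℕ n) : List.Vector Bool n :=
  v.map fun x => decide (x ∈ A)

namespace BTTProof

/-- Stage-`s` approximation to membership in `Kset`. -/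
def kAt (s q : ℕ) : Bool :=
  (Nat.Partrec.Code.evaln s (Denumerable.ofNat Nat.Partrec.Code q) q).isSome

lemma kAt_primrec : Primrec₂ kAt := by
  have h := Nat.Partrec.Code.primrec_evaln
  exact Primrec.option_isSome.comp
    (h.comp ((Primrec.fst.pair ((Primrec.ofNat _).comp Primrec.snd)).pair Primrec.snd))

lemma kAt_mono {s t q : ℕ} (hst : s ≤ t) (h : kAt s q = true) : kAt t q = true := by
  unfold kAt at *
  rw [Option.isSome_iff_exists] at *
  obtain ⟨a, ha⟩ := h
  exact ⟨a, Nat.Partrec.Code.evaln_mono hst ha⟩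

lemma kAt_mem {s q : ℕ} (h : kAt s q = true) : q ∈ Kset := by
  unfold kAt at h
  rw [Option.isSome_iff_exists] at h
  obtain ⟨a, ha⟩ := h
  exact Part.dom_iff_mem.2 ⟨a, Nat.Partrec.Code.evaln_complete.2 ⟨s, ha⟩⟩

lemma mem_iff_kAt {q : ℕ} : q ∈ Kset ↔ ∃ s, kAt s q = true := by
  constructor
  · intro h
    obtain ⟨a, ha⟩ := Part.dom_iff_mem.1 h
    obtain ⟨s, hs⟩ := Nat.Partrec.Code.evaln_complete.1 ha
    exact ⟨s, Option.isSome_iff_exists.2 ⟨a, hs⟩⟩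
  · rintro ⟨s, hs⟩; exact kAt_mem hs

open Classical in
lemma kAt_stab (q : ℕ) : ∃ S, ∀ t, S ≤ t → kAt t q = decide (q ∈ Kset) := by
  by_cases hq : q ∈ Kset
  · obtain ⟨s, hs⟩ := mem_iff_kAt.1 hq
    exact ⟨s, fun t ht => by simp [kAt_mono ht hs, hq]⟩
  · refine ⟨0, fun t _ => ?_⟩
    have : kAt t q ≠ true := fun h => hq (kAt_mem h)
    simp [Bool.eq_false_iff.2 this, hq]

lemma answers_stab (l : List ℕ) : ∃ S, ∀ t, S ≤ t → l.map (kAt t) = answers Kset l := by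
  induction l with
  | nil => exact ⟨0, fun t _ => rfl⟩
  | cons q l ih =>
    obtain ⟨S1, h1⟩ := ih
    obtain ⟨S2, h2⟩ := kAt_stab q
    refine ⟨max S1 S2, fun t ht => ?_⟩
    simp only [answers, List.map] at *
    rw [h2 t (le_trans (le_max_right _ _) ht), h1 t (le_trans (le_max_left _ _) ht)]

variable (f : ℕ → List ℕ) (g : ℕ → List Bool → Bool)

/-- The computable stage-`s` approximation to the characteristic function of `D`. -/
noncomputable def hA (x s : ℕ) : ℕ := cond (g x ((f x).map (kAt s))) 1 0

lemma hA_comp (hf : Computable f) (hg : Computable₂ g) : Computable₂ (hA f g) := by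
  have hm : Primrec fun p : ℕ × List ℕ => p.2.map (kAt p.1) :=
    Primrec.list_map Primrec.snd (kAt_primrec.comp (Primrec.fst.comp Primrec.fst) Primrec.snd)
  have hans : Computable fun p : ℕ × ℕ => (f p.1).map (kAt p.2) :=
    hm.to_comp.comp (Computable.snd.pair (hf.comp Computable.fst))
  have hgx : Computable fun p : ℕ × ℕ => g p.1 ((f p.1).map (kAt p.2)) :=
    hg.comp Computable.fst hans
  exact (Computable.cond hgx (Computable.const 1) (Computable.const 0)).to₂

/-- The number of mind changes of the approximation before stage `s`. -/
noncomputable def cnt (x s : ℕ) : ℕ :=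
  Nat.rec 0 (fun t ih => ih + cond (hA f g x t == hA f g x (t + 1)) 0 1) s

lemma cnt_comp (hf : Computable f) (hg : Computable₂ g) : Computable₂ (cnt f g) := by
  have hh := hA_comp f g hf hg
  have step : Computable₂ fun (p : ℕ × ℕ) (q : ℕ × ℕ) =>
      q.2 + cond (hA f g p.1 q.1 == hA f g p.1 (q.1 + 1)) 0 1 := by
    have h1 : Computable fun r : (ℕ × ℕ) × ℕ × ℕ => hA f g r.1.1 r.2.1 :=
      hh.comp (Computable.fst.comp Computable.fst) (Computable.fst.comp Computable.snd)
    have h2 : Computable fun r : (ℕ × ℕ) × ℕ × ℕ => hA f g r.1.1 (r.2.1 + 1) :=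
      hh.comp (Computable.fst.comp Computable.fst)
        (Computable.succ.comp (Computable.fst.comp Computable.snd))
    have hbeq : Computable fun r : (ℕ × ℕ) × ℕ × ℕ =>
        (hA f g r.1.1 r.2.1 == hA f g r.1.1 (r.2.1 + 1)) :=
      (Primrec.beq.to_comp).comp h1 h2
    have hcond : Computable fun r : (ℕ × ℕ) × ℕ × ℕ =>
        cond (hA f g r.1.1 r.2.1 == hA f g r.1.1 (r.2.1 + 1)) 0 1 :=
      Computable.cond hbeq (Computable.const 0) (Computable.const 1)
    exact ((Primrec.nat_add.to_comp).comp (Computable.snd.comp Computable.snd) hcond).to₂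
  exact (Computable.nat_rec Computable.snd (Computable.const 0) step).to₂

lemma cnt_succ (x s : ℕ) :
    cnt f g x (s + 1) = cnt f g x s + cond (hA f g x s == hA f g x (s + 1)) 0 1 := rfl

lemma cnt_mono (x : ℕ) {s t : ℕ} (h : s ≤ t) : cnt f g x s ≤ cnt f g x t := by
  induction t with
  | zero => simp_all
  | succ t ih =>
    rcases Nat.le_succ_iff.1 h with h' | h'
    · exact le_trans (ih h') (by rw [cnt_succ]; omega)
    · subst h'; rfl

lemma cnt_eq_card (x s : ℕ) :
    cnt f g x s =
      ((Finset.range s).filter (fun t => ¬ hA f g x t = hA f g x (t + 1))).card := by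
  induction s with
  | zero => rfl
  | succ s ih =>
    rw [cnt_succ, ih, Finset.range_add_one, Finset.filter_insert]
    by_cases hP : hA f g x s = hA f g x (s + 1)
    · simp [hP]
    · rw [if_pos hP, Finset.card_insert_of_notMem
        (fun hs => Finset.notMem_range_self (Finset.mem_of_mem_filter _ hs))]
      have hb : (hA f g x s == hA f g x (s + 1)) = false := beq_eq_false_iff_ne.2 hP
      rw [hb]
      rfl

lemma kAt_flip {t q : ℕ} (h : ¬ kAt t q = kAt (t + 1) q) :
    kAt t q = false ∧ kAt (t + 1) q = true := by
  cases ht : kAt t q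
  · cases ht' : kAt (t + 1) q
    · exact absurd (ht.trans ht'.symm) h
    · exact ⟨rfl, rfl⟩
  · exact absurd (ht.trans (kAt_mono (Nat.le_succ t) ht).symm) h

lemma no_two_changes {q a b : ℕ} (hab : a < b) (ha : ¬ kAt a q = kAt (a + 1) q)
    (hb : ¬ kAt b q = kAt (b + 1) q) : False := by
  have h1 := kAt_flip ha
  have h2 := kAt_flip hb
  have h3 := kAt_mono (show a + 1 ≤ b by omega) h1.2
  rw [h2.1] at h3
  exact Bool.noConfusion h3

lemma change_exists {x t : ℕ} (h : ¬ hA f g x t = hA f g x (t + 1)) :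
    ∃ i, i < (f x).length ∧ ¬ kAt t ((f x).getD i 0) = kAt (t + 1) ((f x).getD i 0) := by
  by_contra hc
  push_neg at hc
  apply h
  unfold hA
  congr 2
  apply List.ext_getElem (by simp)
  intro i h1 h2
  simp only [List.getElem_map]
  have := hc i (by simpa using h1)
  rwa [List.getD_eq_getElem _ _ (by simpa using h1)] at this

lemma cnt_le_length (x s : ℕ) : cnt f g x s ≤ (f x).length := by
  classical
  rw [cnt_eq_card]
  have hcr := Finset.card_range (f x).length
  rw [← hcr]
  set ι : ℕ → ℕ := fun t =>
    if h : ∃ i, i < (f x).length ∧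
        ¬ kAt t ((f x).getD i 0) = kAt (t + 1) ((f x).getD i 0)
    then Nat.find h else 0 with hι
  apply Finset.card_le_card_of_injOn ι
  · intro t ht
    have hch := (Finset.mem_filter.1 ht).2
    have hex := change_exists f g hch
    simp only [hι, dif_pos hex]
    exact Finset.mem_range.2 (Nat.find_spec hex).1
  · intro a ha b hb hab
    by_contra hne
    have hexa := change_exists f g (Finset.mem_filter.1 (Finset.mem_coe.1 ha)).2
    have hexb := change_exists f g (Finset.mem_filter.1 (Finset.mem_coe.1 hb)).2
    have hia : ι a = Nat.find hexa := by simp only [hι, dif_pos hexa]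
    have hib : ι b = Nat.find hexb := by simp only [hι, dif_pos hexb]
    have hqa := (Nat.find_spec hexa).2
    have hqb := (Nat.find_spec hexb).2
    rw [← hia] at hqa
    rw [← hib, ← hab] at hqb
    rcases Nat.lt_or_ge a b with hlt | hge
    · exact no_two_changes hlt hqa hqb
    · exact no_two_changes (by omega : b < a) hqb hqa

lemma hA_limit (D : Set ℕ) (hiff : ∀ x, x ∈ D ↔ g x (answers Kset (f x)) = true) (x : ℕ) :
    ∃ S, ∀ t, S ≤ t → hA f g x t = chi D x := by
  obtain ⟨S, hS⟩ := answers_stab (f x)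
  refine ⟨S, fun t ht => ?_⟩
  unfold hA
  rw [hS t ht]
  by_cases hx : x ∈ D
  · rw [(hiff x).1 hx]
    simp [chi, hx]
  · have hfalse : g x (answers Kset (f x)) = false := by
      cases hgx : g x (answers Kset (f x))
      · rfl
      · exact absurd ((hiff x).2 hgx) hx
    rw [hfalse]
    simp [chi, hx]

/-- The candidate c.e. sets. -/
def Wset (j N v : ℕ) : Set ℕ :=
  {x | ∃ s, N ≤ x ∧ j ≤ cnt f g x s ∧ hA f g x s = v}

/-- The Boolean predicate searched by the machine enumerating `Wset`. -/
noncomputable def Wpred (j N v : ℕ) (x s : ℕ) : Bool :=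
  decide (N ≤ x) && (decide (j ≤ cnt f g x s) && decide (hA f g x s = v))

lemma Wset_ce (hf : Computable f) (hg : Computable₂ g) (j N v : ℕ) :
    CEset (Wset f g j N v) := by
  have d1 : Computable fun p : ℕ × ℕ => decide (N ≤ p.1) :=
    (Primrec.nat_le.comp (Primrec.const N) Primrec.fst).decide.to_comp
  have d2 : Computable fun p : ℕ × ℕ => decide (j ≤ cnt f g p.1 p.2) :=
    Primrec.nat_le.decide.to_comp.comp (Computable.const j) (cnt_comp f g hf hg)
  have d3 : Computable fun p : ℕ × ℕ => decide (hA f g p.1 p.2 = v) :=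
    Primrec.eq.decide.to_comp.comp (hA_comp f g hf hg) (Computable.const v)
  have hp : Computable fun p : ℕ × ℕ =>
      cond (decide (N ≤ p.1))
        (cond (decide (j ≤ cnt f g p.1 p.2)) (decide (hA f g p.1 p.2 = v)) false) false :=
    Computable.cond d1 (Computable.cond d2 d3 (Computable.const false)) (Computable.const false)
  have hpred : Computable₂ (Wpred f g j N v) := by
    have h := hp.of_eq (g := fun p : ℕ × ℕ => Wpred f g j N v p.1 p.2) fun p => by
      cases hd1 : decide (N ≤ p.1) <;> cases hd2 : decide (j ≤ cnt f g p.1 p.2) <;>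
        simp [Wpred, hd1, hd2]
    exact h
  have hΦ : Partrec fun x : ℕ => Nat.rfind fun s => (Wpred f g j N v x s : Part Bool) :=
    Partrec.rfind hpred.partrec₂
  obtain ⟨c, hc⟩ := Nat.Partrec.Code.exists_code.1 (Partrec.nat_iff.1 hΦ)
  refine ⟨c, ?_⟩
  ext x
  rw [Set.mem_setOf_eq, hc]
  refine Iff.trans ?_ Nat.rfind_dom.symm
  constructor
  · rintro ⟨s, hNx, hjs, hvs⟩
    refine ⟨s, ?_, fun _ => trivial⟩
    simp [Wpred, hNx, hjs, hvs]
  · rintro ⟨s, hs, -⟩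
    simp only [Wpred] at hs
    simp at hs
    exact ⟨s, hs.1, hs.2.1, hs.2.2⟩

end BTTProof


/-- If `D ≤_btt K` then `D` is not bi-immune. -/
theorem not_biImmune_of_btt_K (D : Set ℕ) (hD : BTTRed D Kset) :
    ¬ BiImmune D := by
  classical
  obtain ⟨f, g, k, hf, hg, hlen, hiff⟩ := hD
  rintro ⟨⟨-, hDim⟩, ⟨-, hDcim⟩⟩
  have hcnt_le : ∀ x s, BTTProof.cnt f g x s ≤ k :=
    fun x s => le_trans (BTTProof.cnt_le_length f g x s) (hlen x)
  set T : ℕ → Set ℕ := fun j => {x | ∃ s, j ≤ BTTProof.cnt f g x s} with hT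
  have hT0 : (T 0).Infinite := by
    have : T 0 = Set.univ := Set.eq_univ_of_forall (fun x => ⟨0, Nat.zero_le _⟩)
    rw [this]
    exact Set.infinite_univ
  set j : ℕ := Nat.findGreatest (fun j => (T j).Infinite) k with hj
  have hjinf : (T j).Infinite := Nat.findGreatest_spec (P := fun j => (T j).Infinite) (Nat.zero_le k) hT0
  have hjfin : (T (j + 1)).Finite := by
    by_cases hjk : j + 1 ≤ k
    · exact Set.not_infinite.1
        (Nat.findGreatest_is_greatest (P := fun j => (T j).Infinite) (Nat.lt_succ_self j) hjk)
    · have : T (j + 1) = ∅ := by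
        apply Set.eq_empty_iff_forall_notMem.2
        rintro x ⟨s, hs⟩
        exact hjk (le_trans hs (hcnt_le x s))
      rw [this]
      exact Set.finite_empty
  obtain ⟨b, hb⟩ := hjfin.bddAbove
  set N : ℕ := b + 1 with hN
  have hxN : ∀ x ∈ T (j + 1), x < N := fun x hx => Nat.lt_succ_of_le (hb hx)
  -- key: elements of the candidate sets have the right characteristic value
  have key : ∀ v x, x ∈ BTTProof.Wset f g j N v → chi D x = v := by
    rintro v x ⟨s, hNx, hjs, hvs⟩
    have hnotT : x ∉ T (j + 1) := fun h => absurd (hxN x h) (by omega)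
    have hle : ∀ t, BTTProof.cnt f g x t ≤ j := by
      intro t
      by_contra hgt
      exact hnotT ⟨t, by omega⟩
    have hconst : ∀ t, s ≤ t → BTTProof.hA f g x t = BTTProof.hA f g x s := by
      intro t ht
      induction t, ht using Nat.le_induction with
      | base => rfl
      | succ t ht ih =>
        by_cases hch : BTTProof.hA f g x t = BTTProof.hA f g x (t + 1)
        · rw [← hch]; exact ih
        · exfalso
          have h1 : BTTProof.cnt f g x (t + 1) = BTTProof.cnt f g x t + 1 := by
            rw [BTTProof.cnt_succ, beq_eq_false_iff_ne.2 hch]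
            rfl
          have h2 := BTTProof.cnt_mono f g x ht
          have := hle (t + 1)
          omega
    obtain ⟨S, hS⟩ := BTTProof.hA_limit f g D hiff x
    have h1 := hS (max s S) (le_max_right _ _)
    have h2 := hconst (max s S) (le_max_left _ _)
    rw [← h1, h2, hvs]
  have hsub : T j \ Set.Iio N ⊆ BTTProof.Wset f g j N 1 ∪ BTTProof.Wset f g j N 0 := by
    rintro x ⟨⟨s, hjs⟩, hxlt⟩
    have hNx : N ≤ x := not_lt.1 hxlt
    cases hgx : g x ((f x).map (BTTProof.kAt s)) with
    | false =>
      right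
      exact ⟨s, hNx, hjs, by simp [BTTProof.hA, hgx]⟩
    | true =>
      left
      exact ⟨s, hNx, hjs, by simp [BTTProof.hA, hgx]⟩
  have hWinf : (BTTProof.Wset f g j N 1 ∪ BTTProof.Wset f g j N 0).Infinite :=
    Set.Infinite.mono hsub (hjinf.diff (Set.finite_Iio N))
  have hone : (BTTProof.Wset f g j N 1).Infinite ∨ (BTTProof.Wset f g j N 0).Infinite := by
    by_contra h
    push_neg at h
    exact hWinf (h.1.union h.2)
  rcases hone with h1 | h0
  · -- infinite c.e. subset of D
    have hWD : BTTProof.Wset f g j N 1 ⊆ D := by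
      intro x hx
      have := key 1 x hx
      by_contra hxD
      simp [chi, hxD] at this
    exact h1 (hDim _ (BTTProof.Wset_ce f g hf hg j N 1) hWD)
  · -- infinite c.e. subset of Dᶜ
    have hWD : BTTProof.Wset f g j N 0 ⊆ Dᶜ := by
      intro x hx
      have := key 0 x hx
      by_contra hxD
      simp only [Set.mem_compl_iff, not_not] at hxD
      simp [chi, hxD] at this
    exact h0 (hDcim _ (BTTProof.Wset_ce f g hf hg j N 0) hWD)
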